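/- For a pointed space (X, x₀) and n ≥ 1, the group πₙ(X, x₀) with the whisker topology is discrete if and only if X is semilocally n-simply connected at x₀, i.e., there exists an open neighbourhood U of x₀ such that every n-loop in U based at x₀ is nullhomotopic in X. -/

import Mathlib

open scoped Topology unitInterval
open Topology.Homotopy

/-- The set of elements of the `n`-th homotopy group `HomotopyGroup N X x₀` that are represented
by a generalized loop whose image lies in `U`; this is exactly the image of the homomorphism
`πₙ(i) : πₙ(U, x₀) → πₙ(X, x₀)` induced by the inclusion `i : U → X`. -/
def whiskerNbhd (N : Type*) (X : Type*) [TopologicalSpace X] (x₀ : X) (U : Set X) :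
    Set (HomotopyGroup N X x₀) :=
  {p | ∃ f : Ω^ N X x₀, Set.range (⇑f) ⊆ U ∧ ⟦f⟧ = p}

/-- The whisker topology on the homotopy group `HomotopyGroup N X x₀`: the subgroup topology
generated by the cosets `[α] ⬝ πₙ(i)(πₙ(U, x₀))` for `U` an open neighbourhood of `x₀`. -/
def whiskerTopology (N : Type*) [DecidableEq N] [Nonempty N]
    (X : Type*) [TopologicalSpace X] (x₀ : X) :
    TopologicalSpace (HomotopyGroup N X x₀) :=
  TopologicalSpace.generateFrom
    {C | ∃ (p : HomotopyGroup N X x₀) (U : Set X), IsOpen U ∧ x₀ ∈ U ∧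
      C = (fun q => p * q) '' whiskerNbhd N X x₀ U}

lemma range_transAt_subset {N X : Type*} [TopologicalSpace X] [DecidableEq N] {x : X} (i : N)
    (f g : Ω^ N X x) :
    Set.range (⇑(GenLoop.transAt i f g)) ⊆ Set.range (⇑f) ∪ Set.range (⇑g) := by
  rintro _ ⟨t, rfl⟩
  show (GenLoop.transAt i f g) t ∈ _
  rw [GenLoop.transAt, GenLoop.coe_copy]
  split_ifs
  · exact Or.inl ⟨_, rfl⟩
  · exact Or.inr ⟨_, rfl⟩

lemma whiskerNbhd_one_mem {N X : Type*} [TopologicalSpace X] [DecidableEq N] [Nonempty N] {x₀ : X} {U : Set X}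
    (hU : x₀ ∈ U) : (1 : HomotopyGroup N X x₀) ∈ whiskerNbhd N X x₀ U := by
  refine ⟨GenLoop.const, ?_, (HomotopyGroup.one_def).symm⟩
  rintro _ ⟨t, rfl⟩
  exact hU

lemma whiskerNbhd_mul_mem {N X : Type*} [TopologicalSpace X] [DecidableEq N] [Nonempty N]
    {x₀ : X} {U : Set X} {p q : HomotopyGroup N X x₀}
    (hp : p ∈ whiskerNbhd N X x₀ U) (hq : q ∈ whiskerNbhd N X x₀ U) :
    p * q ∈ whiskerNbhd N X x₀ U := by
  obtain ⟨f, hf, rfl⟩ := hp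
  obtain ⟨g, hg, rfl⟩ := hq
  refine ⟨GenLoop.transAt (Classical.arbitrary N) g f, ?_, ?_⟩
  · exact (range_transAt_subset _ g f).trans (Set.union_subset hg hf)
  · exact (HomotopyGroup.mul_spec (i := Classical.arbitrary N)).symm

lemma whiskerNbhd_mono {N X : Type*} [TopologicalSpace X] {x₀ : X} {U V : Set X}
    (h : U ⊆ V) : whiskerNbhd N X x₀ U ⊆ whiskerNbhd N X x₀ V := by
  rintro p ⟨f, hf, rfl⟩
  exact ⟨f, hf.trans h, rfl⟩

lemma exists_whisker_basic {N X : Type*} [TopologicalSpace X] [DecidableEq N] [Nonempty N]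
    {x₀ : X} {s : Set (HomotopyGroup N X x₀)}
    (hs : TopologicalSpace.GenerateOpen
      {C | ∃ (p : HomotopyGroup N X x₀) (U : Set X), IsOpen U ∧ x₀ ∈ U ∧
        C = (fun q => p * q) '' whiskerNbhd N X x₀ U} s)
    {q : HomotopyGroup N X x₀} (hq : q ∈ s) :
    ∃ U : Set X, IsOpen U ∧ x₀ ∈ U ∧ (fun r => q * r) '' whiskerNbhd N X x₀ U ⊆ s := by
  induction hs with
  | basic t ht =>
    obtain ⟨p, U, hUo, hUx, rfl⟩ := ht
    obtain ⟨h, hh, rfl⟩ := hq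
    refine ⟨U, hUo, hUx, ?_⟩
    rintro _ ⟨k, hk, rfl⟩
    exact ⟨h * k, whiskerNbhd_mul_mem hh hk, (mul_assoc p h k).symm⟩
  | univ =>
    exact ⟨Set.univ, isOpen_univ, trivial, fun _ _ => trivial⟩
  | inter t₁ t₂ _ _ ih₁ ih₂ =>
    obtain ⟨U, hUo, hUx, hU⟩ := ih₁ hq.1
    obtain ⟨V, hVo, hVx, hV⟩ := ih₂ hq.2
    refine ⟨U ∩ V, hUo.inter hVo, ⟨hUx, hVx⟩, fun r hr => ?_⟩
    refine ⟨hU (Set.image_mono (whiskerNbhd_mono Set.inter_subset_left) hr),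
      hV (Set.image_mono (whiskerNbhd_mono Set.inter_subset_right) hr)⟩
  | sUnion S _ ih =>
    obtain ⟨t, htS, hqt⟩ := hq
    obtain ⟨U, hUo, hUx, hU⟩ := ih t htS hqt
    exact ⟨U, hUo, hUx, hU.trans (Set.subset_sUnion_of_mem htS)⟩

/-- For n ≥ 1, the whisker topology on the n-th homotopy group is discrete if and only if X is
semilocally n-simply connected at the base point: some open neighbourhood U of the base point
exists such that every n-loop in U based at the base point is nullhomotopic in X. -/
theorem whiskerTopology_discrete_iff (n : ℕ)
    (X : Type*) [TopologicalSpace X] (x₀ : X) :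
    whiskerTopology (Fin (n + 1)) X x₀ = (⊥ : TopologicalSpace (HomotopyGroup (Fin (n + 1)) X x₀)) ↔
      ∃ U : Set X, IsOpen U ∧ x₀ ∈ U ∧
        ∀ f : Ω^ (Fin (n + 1)) X x₀, Set.range (⇑f) ⊆ U →
          (⟦f⟧ : HomotopyGroup (Fin (n + 1)) X x₀) = (1 : HomotopyGroup (Fin (n + 1)) X x₀) := by
  constructor
  · intro h
    have hone : IsOpen[whiskerTopology (Fin (n + 1)) X x₀]
        ({1} : Set (HomotopyGroup (Fin (n + 1)) X x₀)) := by
      rw [h]; trivial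
    obtain ⟨U, hUo, hUx, hU⟩ := exists_whisker_basic hone (Set.mem_singleton 1)
    refine ⟨U, hUo, hUx, fun f hf => ?_⟩
    have hfU : (⟦f⟧ : HomotopyGroup (Fin (n + 1)) X x₀) ∈ whiskerNbhd (Fin (n + 1)) X x₀ U :=
      ⟨f, hf, rfl⟩
    have := hU (Set.mem_image_of_mem _ hfU)
    exact (one_mul (M := HomotopyGroup (Fin (n + 1)) X x₀) _).symm.trans this
  · rintro ⟨U, hUo, hUx, hU⟩
    have hNbhd : whiskerNbhd (Fin (n + 1)) X x₀ U = {1} := by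
      apply Set.eq_singleton_iff_unique_mem.mpr
      refine ⟨whiskerNbhd_one_mem hUx, ?_⟩
      rintro _ ⟨f, hf, rfl⟩
      exact hU f hf
    refine le_bot_iff.mp fun s _ => ?_
    have hsingle : ∀ q : HomotopyGroup (Fin (n + 1)) X x₀,
        IsOpen[whiskerTopology (Fin (n + 1)) X x₀] {q} := by
      intro q
      apply TopologicalSpace.GenerateOpen.basic
      refine ⟨q, U, hUo, hUx, ?_⟩
      rw [hNbhd, Set.image_singleton, mul_one]
    have : s = ⋃₀ ((fun q => ({q} : Set _)) '' s) := by
      ext r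
      simp [Set.mem_sUnion]
    rw [this]
    apply TopologicalSpace.GenerateOpen.sUnion
    rintro _ ⟨r, _, rfl⟩
    exact hsingle r
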